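/- arXiv:2207.10014 — 2 statements merged into one kernel-verified Lean document; each statement's English description precedes it below -/
import Mathlib

section
/- The Lie algebra 𝔧 admits a grading 𝔧 = 𝔧₁ ⊕ 𝔧₂ ⊕ 𝔧₃ with 𝔧₁ = span{X₁, X₂, Y₂₀, Y₁₁, Y₀₂}, 𝔧₂ = span{Y₁₀, Y₀₁}, 𝔧₃ = span{Y}, satisfying [𝔧₁, 𝔧₁] ⊆ 𝔧₂, [𝔧₁, 𝔧₂] ⊆ 𝔧₃, [𝔧₁, 𝔧₃] = 0, and moreover [𝔧₁, 𝔧₁] = 𝔧₂ and [𝔧₁, 𝔧₂] = 𝔧₃ (so 𝔧 is stratified with growth vector (5,7,8)). -/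
private lemma bracket_span_span {L : Type*} [LieRing L] [LieAlgebra ℝ L]
    (s t : Set L) (K : Submodule ℝ L) (h : ∀ x ∈ s, ∀ y ∈ t, ⁅x, y⁆ ∈ K) :
    ∀ u ∈ Submodule.span ℝ s, ∀ v ∈ Submodule.span ℝ t, ⁅u, v⁆ ∈ K := by
  intro u hu
  induction hu using Submodule.span_induction with
  | mem x hx =>
    intro v hv
    induction hv using Submodule.span_induction with
    | mem y hy => exact h x hx y hy
    | zero => rw [lie_zero]; exact zero_mem _
    | add y z _ _ ihy ihz => rw [lie_add]; exact add_mem ihy ihz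
    | smul a y _ ih => rw [lie_smul]; exact Submodule.smul_mem _ _ ih
  | zero => intro v hv; rw [zero_lie]; exact zero_mem _
  | add x y _ _ ihx ihy => intro v hv; rw [add_lie]; exact add_mem (ihx v hv) (ihy v hv)
  | smul a x _ ih => intro v hv; rw [smul_lie]; exact Submodule.smul_mem _ _ (ih v hv)

private lemma disj_span_span {L : Type*} [AddCommGroup L] [Module ℝ L]
    (b : Module.Basis (Fin 8) ℝ L) (s t : Set (Fin 8)) (hst : Disjoint s t) :
    Disjoint (Submodule.span ℝ (b '' s)) (Submodule.span ℝ (b '' t)) := by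
  rw [Submodule.disjoint_def]
  intro x hxs hxt
  rw [Module.Basis.mem_span_image] at hxs hxt
  have hsupp : (b.repr x).support = ∅ := by
    rw [← Finset.coe_eq_empty, ← Set.subset_empty_iff, ← hst.inter_eq]
    exact Set.subset_inter hxs hxt
  have : b.repr x = 0 := Finsupp.support_eq_empty.mp hsupp
  exact (LinearEquiv.map_eq_zero_iff b.repr).mp this

/-- The Lie algebra `𝔧` (basis `X₁, X₂, Y₂₀, Y₁₁, Y₀₂, Y₁₀, Y₀₁, Y`, indexed `0,…,7`,
with the Carnot brackets) admits the stratification `𝔧 = 𝔧₁ ⊕ 𝔧₂ ⊕ 𝔧₃` with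
`𝔧₁ = span{X₁,X₂,Y₂₀,Y₁₁,Y₀₂}`, `𝔧₂ = span{Y₁₀,Y₀₁}`, `𝔧₃ = span{Y}`, satisfying
`[𝔧₁,𝔧₁] = 𝔧₂`, `[𝔧₁,𝔧₂] = 𝔧₃`, `[𝔧₁,𝔧₃] = 0` (growth vector `(5,7,8)`). -/
theorem stmt5 (L : Type*) [LieRing L] [LieAlgebra ℝ L] (b : Module.Basis (Fin 8) ℝ L)
    (hbr : ∀ i j : Fin 8, ⁅b i, b j⁆ =
      if i = 0 ∧ j = 2 ∨ i = 1 ∧ j = 3 then b 5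
      else if i = 2 ∧ j = 0 ∨ i = 3 ∧ j = 1 then -b 5
      else if i = 0 ∧ j = 3 ∨ i = 1 ∧ j = 4 then b 6
      else if i = 3 ∧ j = 0 ∨ i = 4 ∧ j = 1 then -b 6
      else if i = 0 ∧ j = 5 ∨ i = 1 ∧ j = 6 then b 7
      else if i = 5 ∧ j = 0 ∨ i = 6 ∧ j = 1 then -b 7
      else 0)
    (J1 J2 J3 : Submodule ℝ L)
    (hJ1 : J1 = Submodule.span ℝ {b 0, b 1, b 2, b 3, b 4})
    (hJ2 : J2 = Submodule.span ℝ {b 5, b 6})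
    (hJ3 : J3 = Submodule.span ℝ {b 7}) :
    -- direct sum decomposition 𝔧 = 𝔧₁ ⊕ 𝔧₂ ⊕ 𝔧₃
    DirectSum.IsInternal ![J1, J2, J3] ∧
    -- [𝔧₁, 𝔧₁] = 𝔧₂
    Submodule.span ℝ {z : L | ∃ u ∈ J1, ∃ v ∈ J1, z = ⁅u, v⁆} = J2 ∧
    -- [𝔧₁, 𝔧₂] = 𝔧₃
    Submodule.span ℝ {z : L | ∃ u ∈ J1, ∃ v ∈ J2, z = ⁅u, v⁆} = J3 ∧
    -- [𝔧₁, 𝔧₃] = 0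
    (∀ u ∈ J1, ∀ v ∈ J3, ⁅u, v⁆ = 0) ∧
    -- together the three layers span 𝔧
    J1 ⊔ J2 ⊔ J3 = ⊤ := by
  -- spans as images of index sets
  have hJ1' : J1 = Submodule.span ℝ (b '' ({0, 1, 2, 3, 4} : Set (Fin 8))) := by
    rw [hJ1]; congr 1; simp [Set.image_insert_eq]
  have hJ2' : J2 = Submodule.span ℝ (b '' ({5, 6} : Set (Fin 8))) := by
    rw [hJ2]; congr 1; simp [Set.image_insert_eq]
  have hJ3' : J3 = Submodule.span ℝ (b '' ({7} : Set (Fin 8))) := by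
    rw [hJ3]; congr 1; simp
  -- membership of generators
  have m0 : b 0 ∈ J1 := hJ1 ▸ Submodule.subset_span (by simp)
  have m1 : b 1 ∈ J1 := hJ1 ▸ Submodule.subset_span (by simp)
  have m2 : b 2 ∈ J1 := hJ1 ▸ Submodule.subset_span (by simp)
  have m3 : b 3 ∈ J1 := hJ1 ▸ Submodule.subset_span (by simp)
  have m4 : b 4 ∈ J1 := hJ1 ▸ Submodule.subset_span (by simp)
  have m5 : b 5 ∈ J2 := hJ2 ▸ Submodule.subset_span (by simp)
  have m6 : b 6 ∈ J2 := hJ2 ▸ Submodule.subset_span (by simp)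
  have m7 : b 7 ∈ J3 := hJ3 ▸ Submodule.subset_span (by simp)
  -- bracket computations
  have c02 : ⁅b 0, b 2⁆ = b 5 := by rw [hbr]; simp
  have c03 : ⁅b 0, b 3⁆ = b 6 := by rw [hbr]; simp
  have c05 : ⁅b 0, b 5⁆ = b 7 := by rw [hbr]; simp
  -- [J1, J1] ⊆ J2
  have k11 : ∀ u ∈ J1, ∀ v ∈ J1, ⁅u, v⁆ ∈ J2 := by
    rw [hJ1]
    refine bracket_span_span _ _ _ ?_
    intro x hx y hy
    simp only [Set.mem_insert_iff, Set.mem_singleton_iff] at hx hy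
    rcases hx with rfl | rfl | rfl | rfl | rfl <;>
      rcases hy with rfl | rfl | rfl | rfl | rfl <;>
      rw [hbr] <;> simp only [Fin.isValue] <;> simp <;>
      first
        | exact m5 | exact m6 | exact neg_mem m5 | exact neg_mem m6 | exact zero_mem _
  -- [J1, J2] ⊆ J3
  have k12 : ∀ u ∈ J1, ∀ v ∈ J2, ⁅u, v⁆ ∈ J3 := by
    rw [hJ1, hJ2]
    refine bracket_span_span _ _ _ ?_
    intro x hx y hy
    simp only [Set.mem_insert_iff, Set.mem_singleton_iff] at hx hy
    rcases hx with rfl | rfl | rfl | rfl | rfl <;>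
      rcases hy with rfl | rfl <;>
      rw [hbr] <;> simp only [Fin.isValue] <;> simp <;>
      first
        | exact m7 | exact zero_mem _
  -- [J1, J3] = 0
  have k13 : ∀ u ∈ J1, ∀ v ∈ J3, ⁅u, v⁆ = 0 := by
    have h0 : ∀ u ∈ J1, ∀ v ∈ J3, ⁅u, v⁆ ∈ (⊥ : Submodule ℝ L) := by
      rw [hJ1, hJ3]
      refine bracket_span_span _ _ _ ?_
      intro x hx y hy
      simp only [Set.mem_insert_iff, Set.mem_singleton_iff] at hx hy
      subst hy
      rcases hx with rfl | rfl | rfl | rfl | rfl <;> rw [hbr] <;> simp only [Fin.isValue] <;> simp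
    intro u hu v hv
    simpa using h0 u hu v hv
  -- top
  have htop : J1 ⊔ J2 ⊔ J3 = ⊤ := by
    rw [eq_top_iff, ← b.span_eq]
    refine Submodule.span_le.mpr ?_
    rintro x ⟨i, rfl⟩
    fin_cases i
    · exact Submodule.mem_sup_left (Submodule.mem_sup_left m0)
    · exact Submodule.mem_sup_left (Submodule.mem_sup_left m1)
    · exact Submodule.mem_sup_left (Submodule.mem_sup_left m2)
    · exact Submodule.mem_sup_left (Submodule.mem_sup_left m3)
    · exact Submodule.mem_sup_left (Submodule.mem_sup_left m4)
    · exact Submodule.mem_sup_left (Submodule.mem_sup_right m5)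
    · exact Submodule.mem_sup_left (Submodule.mem_sup_right m6)
    · exact Submodule.mem_sup_right m7
  -- independence
  have hind : iSupIndep ![J1, J2, J3] := by
    have dset1 : Disjoint ({0, 1, 2, 3, 4} : Set (Fin 8)) ({5, 6, 7} : Set (Fin 8)) := by
      rw [Set.disjoint_left]
      intro a ha hb
      simp only [Set.mem_insert_iff, Set.mem_singleton_iff] at ha hb
      rcases ha with rfl | rfl | rfl | rfl | rfl <;> simp at hb
    have dset2 : Disjoint ({5, 6} : Set (Fin 8)) ({0, 1, 2, 3, 4, 7} : Set (Fin 8)) := by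
      rw [Set.disjoint_left]
      intro a ha hb
      simp only [Set.mem_insert_iff, Set.mem_singleton_iff] at ha hb
      rcases ha with rfl | rfl <;> simp at hb
    have dset3 : Disjoint ({7} : Set (Fin 8)) ({0, 1, 2, 3, 4, 5, 6} : Set (Fin 8)) := by
      rw [Set.disjoint_left]
      intro a ha hb
      simp only [Set.mem_insert_iff, Set.mem_singleton_iff] at ha hb
      subst ha; simp at hb
    intro i
    fin_cases i
    · refine ((disj_span_span b _ _ dset1).mono hJ1'.le ?_)
      refine iSup_le fun j => iSup_le fun hj => ?_
      fin_cases j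
      · exact absurd rfl hj
      · show J2 ≤ _
        rw [hJ2']
        exact Submodule.span_mono (Set.image_mono (by intro x hx; simp only [Set.mem_insert_iff, Set.mem_singleton_iff] at hx ⊢; tauto))
      · show J3 ≤ _
        rw [hJ3']
        exact Submodule.span_mono (Set.image_mono (by intro x hx; simp only [Set.mem_singleton_iff] at hx; simp [hx]))
    · refine ((disj_span_span b _ _ dset2).mono hJ2'.le ?_)
      refine iSup_le fun j => iSup_le fun hj => ?_
      fin_cases j
      · show J1 ≤ _
        rw [hJ1']
        exact Submodule.span_mono (Set.image_mono (by intro x hx; simp only [Set.mem_insert_iff, Set.mem_singleton_iff] at hx ⊢; tauto))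
      · exact absurd rfl hj
      · show J3 ≤ _
        rw [hJ3']
        exact Submodule.span_mono (Set.image_mono (by intro x hx; simp only [Set.mem_singleton_iff] at hx; simp [hx]))
    · refine ((disj_span_span b _ _ dset3).mono hJ3'.le ?_)
      refine iSup_le fun j => iSup_le fun hj => ?_
      fin_cases j
      · show J1 ≤ _
        rw [hJ1']
        exact Submodule.span_mono (Set.image_mono (by intro x hx; simp only [Set.mem_insert_iff, Set.mem_singleton_iff] at hx ⊢; tauto))
      · show J2 ≤ _
        rw [hJ2']
        exact Submodule.span_mono (Set.image_mono (by intro x hx; simp only [Set.mem_insert_iff, Set.mem_singleton_iff] at hx ⊢; tauto))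
      · exact absurd rfl hj
  have hsup : ⨆ i, (![J1, J2, J3] : Fin 3 → Submodule ℝ L) i = ⊤ := by
    rw [eq_top_iff, ← htop]
    exact sup_le (sup_le (le_iSup (![J1, J2, J3] : Fin 3 → Submodule ℝ L) 0) (le_iSup (![J1, J2, J3] : Fin 3 → Submodule ℝ L) 1)) (le_iSup (![J1, J2, J3] : Fin 3 → Submodule ℝ L) 2)
  refine ⟨DirectSum.isInternal_submodule_of_iSupIndep_of_iSup_eq_top hind hsup, ?_, ?_, k13, htop⟩
  · refine le_antisymm (Submodule.span_le.mpr ?_) ?_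
    · rintro z ⟨u, hu, v, hv, rfl⟩
      exact k11 u hu v hv
    · rw [hJ2]
      refine Submodule.span_le.mpr ?_
      intro z hz
      simp only [Set.mem_insert_iff, Set.mem_singleton_iff] at hz
      rcases hz with rfl | rfl
      · exact Submodule.subset_span ⟨b 0, m0, b 2, m2, c02.symm⟩
      · exact Submodule.subset_span ⟨b 0, m0, b 3, m3, c03.symm⟩
  · refine le_antisymm (Submodule.span_le.mpr ?_) ?_
    · rintro z ⟨u, hu, v, hv, rfl⟩
      exact k12 u hu v hv
    · rw [hJ3]
      refine Submodule.span_le.mpr ?_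
      intro z hz
      simp only [Set.mem_singleton_iff] at hz
      subst hz
      exact Submodule.subset_span ⟨b 0, m0, b 5, m5, c05.symm⟩
end

section
/- Along any solution of Hamilton's equations for H_sR in exponential coordinates with the momenta p₁,…,p₆ taking constant values a₁,…,a₆, the projection (x(t), y(t), p_x(t), p_y(t)) satisfies Hamilton's equations for the reduced Hamiltonian H_μ(p_x,p_y,x,y) = ½(p_x² + p_y² + φ_μ(x,y)) with φ_μ(x,y) = (a₁ + a₄x + a₆x²/2)² + (a₂ + a₅x + a₄y + a₆xy)² + (a₃ + a₅y + a₆y²/2)². -/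
/-- The subRiemannian Hamiltonian `H_sR` on `T*ℝ⁸` in exponential coordinates of the
second kind: positions `q = (x, y, θ₁, …, θ₆)`, momenta `p = (p_x, p_y, p₁, …, p₆)`. -/
noncomputable def Hsr (q p : Fin 8 → ℝ) : ℝ :=
  (1 / 2) * ((p 0) ^ 2 + (p 1) ^ 2
    + (p 2 + q 0 * p 5 + (q 0) ^ 2 / 2 * p 7) ^ 2
    + (p 3 + q 1 * p 5 + q 0 * p 6 + q 0 * q 1 * p 7) ^ 2
    + (p 4 + q 1 * p 6 + (q 1) ^ 2 / 2 * p 7) ^ 2)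

/-- The reduced Hamiltonian `H_μ(p_x,p_y,x,y) = ½(p_x² + p_y² + φ_μ(x,y))` with
`μ = (a₁,…,a₆) = (a 2, …, a 7)`. -/
noncomputable def Hmu (a : Fin 8 → ℝ) (x y px py : ℝ) : ℝ :=
  (1 / 2) * (px ^ 2 + py ^ 2
    + (a 2 + x * a 5 + x ^ 2 / 2 * a 7) ^ 2
    + (a 3 + y * a 5 + x * a 6 + x * y * a 7) ^ 2
    + (a 4 + y * a 6 + y ^ 2 / 2 * a 7) ^ 2)

/-- A directional derivative of a differentiable function on `ℝ⁸` in the `i`-th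
coordinate direction is the one-variable derivative along the `i`-th coordinate slice. -/
lemma partial_eq (f : (Fin 8 → ℝ) → ℝ) (x : Fin 8 → ℝ) (i : Fin 8)
    (hf : DifferentiableAt ℝ f x) :
    fderiv ℝ f x (Pi.single i 1) = deriv (fun w => f (Function.update x i w)) (x i) := by
  have hg : ∀ w : ℝ, Function.update x i w = x + (w - x i) • (Pi.single i 1 : Fin 8 → ℝ) := by
    intro w; funext j
    by_cases h : j = i
    · subst h; simp
    · simp [Function.update_of_ne h, Pi.single_apply, h]
  have hgd : HasDerivAt (fun w : ℝ => x + (w - x i) • (Pi.single i 1 : Fin 8 → ℝ))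
      (Pi.single i 1) (x i) := by
    have h1 : HasDerivAt (fun w : ℝ => w - x i) 1 (x i) := (hasDerivAt_id _).sub_const _
    simpa using (h1.smul_const (Pi.single i 1 : Fin 8 → ℝ)).const_add x
  have hx : x + ((x i) - x i) • (Pi.single i 1 : Fin 8 → ℝ) = x := by simp
  have hcomp : HasDerivAt (fun w => f (x + (w - x i) • (Pi.single i 1 : Fin 8 → ℝ)))
      (fderiv ℝ f x (Pi.single i 1)) (x i) := by
    have h2 : HasFDerivAt f (fderiv ℝ f x)
        ((fun w : ℝ => x + (w - x i) • (Pi.single i 1 : Fin 8 → ℝ)) (x i)) := by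
      simpa [hx] using hf.hasFDerivAt
    exact h2.comp_hasDerivAt (x i) hgd
  have heq : (fun w => f (Function.update x i w))
      = fun w => f (x + (w - x i) • (Pi.single i 1 : Fin 8 → ℝ)) := by
    funext w; rw [hg]
  rw [heq]
  exact hcomp.deriv.symm

/-- Along any solution of Hamilton's equations for `H_sR` on which the momenta
`p₁,…,p₆` take the constant values `a₁,…,a₆`, the projection `(x, y, p_x, p_y)`
satisfies Hamilton's equations for the reduced Hamiltonian `H_μ`. -/
theorem stmt14 (q p : ℝ → Fin 8 → ℝ) (a : Fin 8 → ℝ)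
    (hq : ∀ t (i : Fin 8), HasDerivAt (fun s => q s i)
      (fderiv ℝ (fun pp => Hsr (q t) pp) (p t) (Pi.single i 1)) t)
    (hp : ∀ t (i : Fin 8), HasDerivAt (fun s => p s i)
      (-(fderiv ℝ (fun qq => Hsr qq (p t)) (q t) (Pi.single i 1))) t)
    (ha : ∀ t : ℝ, ∀ i : Fin 8, 2 ≤ (i : ℕ) → p t i = a i) :
    ∀ t : ℝ,
      HasDerivAt (fun s => q s 0)
        (deriv (fun w => Hmu a (q t 0) (q t 1) w (p t 1)) (p t 0)) t ∧
      HasDerivAt (fun s => q s 1)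
        (deriv (fun w => Hmu a (q t 0) (q t 1) (p t 0) w) (p t 1)) t ∧
      HasDerivAt (fun s => p s 0)
        (-(deriv (fun w => Hmu a w (q t 1) (p t 0) (p t 1)) (q t 0))) t ∧
      HasDerivAt (fun s => p s 1)
        (-(deriv (fun w => Hmu a (q t 0) w (p t 0) (p t 1)) (q t 1))) t := by
  intro t
  have h2 : p t 2 = a 2 := ha t 2 (by decide)
  have h3 : p t 3 = a 3 := ha t 3 (by decide)
  have h4 : p t 4 = a 4 := ha t 4 (by decide)
  have h5 : p t 5 = a 5 := ha t 5 (by decide)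
  have h6 : p t 6 = a 6 := ha t 6 (by decide)
  have h7 : p t 7 = a 7 := ha t 7 (by decide)
  have hdp : DifferentiableAt ℝ (fun pp => Hsr (q t) pp) (p t) := by unfold Hsr; fun_prop
  have hdq : DifferentiableAt ℝ (fun qq => Hsr qq (p t)) (q t) := by unfold Hsr; fun_prop
  refine ⟨?_, ?_, ?_, ?_⟩
  · have h := hq t 0
    rw [partial_eq _ _ _ hdp] at h
    have heq : (fun w => Hsr (q t) (Function.update (p t) 0 w))
        = fun w => Hmu a (q t 0) (q t 1) w (p t 1) := by
      funext w
      simp [Hsr, Hmu, Function.update_apply, h2, h3, h4, h5, h6, h7]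
    rwa [heq] at h
  · have h := hq t 1
    rw [partial_eq _ _ _ hdp] at h
    have heq : (fun w => Hsr (q t) (Function.update (p t) 1 w))
        = fun w => Hmu a (q t 0) (q t 1) (p t 0) w := by
      funext w
      simp [Hsr, Hmu, Function.update_apply, h2, h3, h4, h5, h6, h7]
    rwa [heq] at h
  · have h := hp t 0
    rw [partial_eq _ _ _ hdq] at h
    have heq : (fun w => Hsr (Function.update (q t) 0 w) (p t))
        = fun w => Hmu a w (q t 1) (p t 0) (p t 1) := by
      funext w
      simp [Hsr, Hmu, Function.update_apply, h2, h3, h4, h5, h6, h7]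
    rwa [heq] at h
  · have h := hp t 1
    rw [partial_eq _ _ _ hdq] at h
    have heq : (fun w => Hsr (Function.update (q t) 1 w) (p t))
        = fun w => Hmu a (q t 0) w (p t 0) (p t 1) := by
      funext w
      simp [Hsr, Hmu, Function.update_apply, h2, h3, h4, h5, h6, h7]
    rwa [heq] at h
end
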